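/- Let U be a finite set, let 𝒰 be a finite family of subsets of U, and let u be an element of U. Then the collection of exact covers of U by 𝒰 is the union, over all R ∈ 𝒰 with u ∈ R, of the collections {S : S is an exact cover of U by 𝒰 and R ∈ S}; moreover, for distinct R, R' ∈ 𝒰 with u ∈ R and u ∈ R', the two collections are disjoint (no exact cover contains both R and R'). -/
import Mathlib


/-- `S` is an exact cover of `U` by the family `𝒰`: `S ⊆ 𝒰`, the members of `S` are
pairwise disjoint, and their union is `U`. -/
def IsExactCover {α : Type*} [DecidableEq α] (U : Finset α) (𝒰 : Finset (Finset α))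
    (S : Finset (Finset α)) : Prop :=
  S ⊆ 𝒰 ∧ (S : Set (Finset α)).Pairwise Disjoint ∧ S.sup id = U

theorem exactCovers_eq_biUnion_and_pairwise_disjoint
    {α : Type*} [DecidableEq α] (U : Finset α) (𝒰 : Finset (Finset α))
    (u : α) (hu : u ∈ U) :
    ({S | IsExactCover U 𝒰 S} =
        ⋃ R ∈ 𝒰.filter (fun R => u ∈ R), {S | IsExactCover U 𝒰 S ∧ R ∈ S}) ∧
    (∀ R R' : Finset α, R ∈ 𝒰 → R' ∈ 𝒰 → u ∈ R → u ∈ R' → R ≠ R' →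
        ∀ S, ¬(IsExactCover U 𝒰 S ∧ R ∈ S ∧ R' ∈ S)) := by
  constructor
  · ext S
    simp only [Set.mem_setOf_eq, Set.mem_iUnion, Finset.mem_filter, exists_prop]
    constructor
    · intro hS
      obtain ⟨hsub, hpd, hsup⟩ := hS
      have : u ∈ S.sup id := hsup ▸ hu
      obtain ⟨R, hRS, huR⟩ := Finset.mem_sup.mp this
      exact ⟨R, ⟨hsub hRS, huR⟩, ⟨hsub, hpd, hsup⟩, hRS⟩
    · rintro ⟨R, _, hS, _⟩
      exact hS
  · rintro R R' hR hR' huR huR' hne S ⟨⟨_, hpd, _⟩, hRS, hR'S⟩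
    have := hpd (Finset.mem_coe.mpr hRS) (Finset.mem_coe.mpr hR'S) hne
    exact (Finset.disjoint_left.mp this huR) huR'
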